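/- Let 𝕂 be ℝ or ℂ, V a 𝕂-vector space, and U : V³ → 𝕂 a trilinear map satisfying ηU = U, where η ∈ 𝕂[S₃] acts on U as a symmetry operator. Then for all x,y,z ∈ V the following four identities hold: U(z,y,x) = U(x,y,z); U(x,y,z) + U(x,z,y) + U(z,x,y) = 0; U(y,z,x) = U(x,z,y); and U(x,y,z) + U(x,z,y) + U(y,x,z) = 0. -/

import Mathlib

/-- The action of a group-algebra element `a ∈ 𝕂[S_r]` on an `r`-linear map:
`(aT)(v₁,…,v_r) = Σ_p a(p)·T(v_{p(1)},…,v_{p(r)})`. -/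
noncomputable def gaAct {𝕂 : Type*} [RCLike 𝕂] {V : Type*} [AddCommGroup V] [Module 𝕂 V]
    {r : ℕ} (a : MonoidAlgebra 𝕂 (Equiv.Perm (Fin r)))
    (T : MultilinearMap 𝕂 (fun _ : Fin r => V) 𝕂) :
    MultilinearMap 𝕂 (fun _ : Fin r => V) 𝕂 :=
  ∑ p : Equiv.Perm (Fin r), a.coeff p • T.domDomCongr p

/-- The idempotent `η = (1/3)(id − (1 2) − c + (1 3))` of `𝕂[S₃]`, where `c` is the
3-cycle `1↦2↦3↦1` (0-based: `finRotate 3`; `(1 2)` is `swap 0 1`, `(1 3)` is `swap 0 2`). -/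
noncomputable def etaK (𝕂 : Type*) [RCLike 𝕂] : MonoidAlgebra 𝕂 (Equiv.Perm (Fin 3)) :=
  (3⁻¹ : 𝕂) • (MonoidAlgebra.single 1 1
    - MonoidAlgebra.single (Equiv.swap (0 : Fin 3) 1) 1
    - MonoidAlgebra.single (finRotate 3) 1
    + MonoidAlgebra.single (Equiv.swap (0 : Fin 3) 2) 1)

lemma ma_add_apply {𝕂 : Type*} [RCLike 𝕂] (a b : MonoidAlgebra 𝕂 (Equiv.Perm (Fin 3))) (p) :
    (a + b).coeff p = a.coeff p + b.coeff p := rfl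
lemma ma_sub_apply {𝕂 : Type*} [RCLike 𝕂] (a b : MonoidAlgebra 𝕂 (Equiv.Perm (Fin 3))) (p) :
    (a - b).coeff p = a.coeff p - b.coeff p := rfl
lemma ma_smul_apply {𝕂 : Type*} [RCLike 𝕂] (c : 𝕂) (a : MonoidAlgebra 𝕂 (Equiv.Perm (Fin 3))) (p) :
    (c • a).coeff p = c * a.coeff p := rfl

lemma etaK_apply {𝕂 : Type*} [RCLike 𝕂] (p : Equiv.Perm (Fin 3)) :
    (etaK 𝕂).coeff p = (3⁻¹ : 𝕂) * ((if (1:Equiv.Perm (Fin 3)) = p then 1 else 0)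
      - (if Equiv.swap (0:Fin 3) 1 = p then 1 else 0)
      - (if finRotate 3 = p then 1 else 0)
      + (if Equiv.swap (0:Fin 3) 2 = p then 1 else 0)) := by
  rw [etaK, ma_smul_apply, ma_add_apply, ma_sub_apply, ma_sub_apply]
  simp [MonoidAlgebra.coeff_single, Finsupp.single_apply]

lemma key {𝕂 : Type*} [RCLike 𝕂] {V : Type*} [AddCommGroup V] [Module 𝕂 V]
    (U : MultilinearMap 𝕂 (fun _ : Fin 3 => V) 𝕂)
    (hU : gaAct (etaK 𝕂) U = U) (x y z : V) :
    2 * U ![x, y, z] + U ![y, x, z] + U ![y, z, x] - U ![z, y, x] = 0 := by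
  have h := DFunLike.congr_fun hU ![x, y, z]
  rw [gaAct] at h
  simp only [MultilinearMap.sum_apply, MultilinearMap.smul_apply, smul_eq_mul,
    MultilinearMap.domDomCongr_apply, etaK_apply, mul_assoc, ite_mul, one_mul, zero_mul,
    sub_mul, add_mul, mul_ite, mul_one, mul_zero, mul_add, mul_sub, mul_ite,
    Finset.sum_add_distrib, Finset.sum_sub_distrib, Finset.sum_ite_eq,
    Finset.mem_univ, if_true] at h
  have h1 : (fun i => ![x,y,z] ((1 : Equiv.Perm (Fin 3)) i)) = ![x,y,z] := by
    funext i; fin_cases i <;> rfl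
  have h2 : (fun i => ![x,y,z] (Equiv.swap (0:Fin 3) 1 i)) = ![y,x,z] := by
    funext i; fin_cases i <;> rfl
  have h3 : (fun i => ![x,y,z] (finRotate 3 i)) = ![y,z,x] := by
    funext i; fin_cases i <;> rfl
  have h4 : (fun i => ![x,y,z] (Equiv.swap (0:Fin 3) 2 i)) = ![z,y,x] := by
    funext i; fin_cases i <;> rfl
  rw [h1, h2, h3, h4] at h
  have h3ne : (3 : 𝕂) ≠ 0 := by norm_num
  field_simp at h
  linear_combination -h

/-- A trilinear map `U` with `ηU = U` satisfies the four linear identities (4.11). -/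
theorem stmt17 {𝕂 : Type*} [RCLike 𝕂] {V : Type*} [AddCommGroup V] [Module 𝕂 V]
    (U : MultilinearMap 𝕂 (fun _ : Fin 3 => V) 𝕂)
    (hU : gaAct (etaK 𝕂) U = U) :
    ∀ x y z : V,
      U ![z, y, x] = U ![x, y, z] ∧
      U ![x, y, z] + U ![x, z, y] + U ![z, x, y] = 0 ∧
      U ![y, z, x] = U ![x, z, y] ∧
      U ![x, y, z] + U ![x, z, y] + U ![y, x, z] = 0 := by
  intro x y z
  have E1 := key U hU x y z
  have E2 := key U hU x z y
  have E3 := key U hU y x z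
  have E4 := key U hU y z x
  have E5 := key U hU z x y
  have E6 := key U hU z y x
  refine ⟨?_, ?_, ?_, ?_⟩
  · linear_combination (-E1 + E6) / 3
  · linear_combination (2 * E5 + E3) / 3
  · linear_combination (E4 - E2) / 3
  · linear_combination (2 * E3 + E5) / 3
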